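/- Let C ⊆ ℝⁿ be a closed, pointed, full-dimensional convex cone, and let A ⊆ C and B ⊆ C* be subsets each of which spans ℝⁿ. Suppose there exist sets Ã ⊆ C, B̃ ⊆ C* and bijections g : A → Ã, q : B → B̃ with ⟨a, b⟩ = ⟨g(a), q(b)⟩ for all a ∈ A and b ∈ B. Then g and q extend to invertible linear maps on ℝⁿ, and q is the inverse of the adjoint of g. -/

import Mathlib

open scoped InnerProductSpace

/-- The dual cone of a set in a real inner product space. -/
def dualCone {n : ℕ} (C : Set (EuclideanSpace ℝ (Fin n))) : Set (EuclideanSpace ℝ (Fin n)) :=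
  {y | ∀ x ∈ C, 0 ≤ ⟪x, y⟫_ℝ}

theorem stmt_0 {n : ℕ} (C : Set (EuclideanSpace ℝ (Fin n)))
    (hclosed : IsClosed C) (hconv : Convex ℝ C)
    (hcone : ∀ (c : ℝ), 0 < c → ∀ x ∈ C, c • x ∈ C)
    (hpointed : ∀ x ∈ C, -x ∈ C → x = 0)
    (hfull : (interior C).Nonempty)
    (A B : Set (EuclideanSpace ℝ (Fin n)))
    (hA : A ⊆ C) (hB : B ⊆ dualCone C)
    (hAspan : Submodule.span ℝ A = ⊤) (hBspan : Submodule.span ℝ B = ⊤)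
    (Atil Btil : Set (EuclideanSpace ℝ (Fin n)))
    (hAtil : Atil ⊆ C) (hBtil : Btil ⊆ dualCone C)
    (g q : EuclideanSpace ℝ (Fin n) → EuclideanSpace ℝ (Fin n))
    (hg : Set.BijOn g A Atil) (hq : Set.BijOn q B Btil)
    (hfact : ∀ a ∈ A, ∀ b ∈ B, ⟪a, b⟫_ℝ = ⟪g a, q b⟫_ℝ) :
    ∃ G Q : EuclideanSpace ℝ (Fin n) ≃ₗ[ℝ] EuclideanSpace ℝ (Fin n),
      Set.EqOn g G A ∧ Set.EqOn q Q B ∧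
      (Q.toLinearMap).comp (LinearMap.adjoint G.toLinearMap) = LinearMap.id := by
  classical
  obtain ⟨s, hsA, hsspan, hsli⟩ := exists_linearIndependent ℝ A
  obtain ⟨t, htB, htspan, htli⟩ := exists_linearIndependent ℝ B
  haveI : Fintype s := (hsli.setFinite).fintype
  haveI : Fintype t := (htli.setFinite).fintype
  have hsA' : Submodule.span ℝ s = ⊤ := by rw [hsspan, hAspan]
  have htB' : Submodule.span ℝ t = ⊤ := by rw [htspan, hBspan]
  let bA : Module.Basis s ℝ (EuclideanSpace ℝ (Fin n)) :=
    Module.Basis.mk hsli (by rw [Subtype.range_coe, hsA'])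
  let bB : Module.Basis t ℝ (EuclideanSpace ℝ (Fin n)) :=
    Module.Basis.mk htli (by rw [Subtype.range_coe, htB'])
  let G₀ := bA.constr ℝ (fun i => g i)
  let Q₀ := bB.constr ℝ (fun j => q j)
  have hGb : ∀ i : s, G₀ (bA i) = g i := fun i => bA.constr_basis ℝ _ i
  have hQb : ∀ j : t, Q₀ (bB j) = q j := fun j => bB.constr_basis ℝ _ j
  have hbAi : ∀ i : s, (bA i : EuclideanSpace ℝ (Fin n)) = i := fun i => by
    simp [bA, Module.Basis.mk_apply]
  have hbBj : ∀ j : t, (bB j : EuclideanSpace ℝ (Fin n)) = j := fun j => by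
    simp [bB, Module.Basis.mk_apply]
  have keyA : ∀ a ∈ A, ∀ y, ⟪g a, Q₀ y⟫_ℝ = ⟪a, y⟫_ℝ := by
    intro a ha y
    conv_lhs => rw [← bB.sum_repr y]
    conv_rhs => rw [← bB.sum_repr y]
    simp only [map_sum, map_smul, inner_sum, real_inner_smul_right]
    refine Finset.sum_congr rfl fun j _ => ?_
    rw [hQb j, hbBj j, ← hfact a ha j (htB j.2)]
  have keyB : ∀ b ∈ B, ∀ x, ⟪G₀ x, q b⟫_ℝ = ⟪x, b⟫_ℝ := by
    intro b hb x
    conv_lhs => rw [← bA.sum_repr x]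
    conv_rhs => rw [← bA.sum_repr x]
    simp only [map_sum, map_smul, sum_inner, real_inner_smul_left]
    refine Finset.sum_congr rfl fun i _ => ?_
    rw [hGb i, hbAi i, ← hfact i (hsA i.2) b hb]
  have key : ∀ x y, ⟪G₀ x, Q₀ y⟫_ℝ = ⟪x, y⟫_ℝ := by
    intro x y
    conv_lhs => rw [← bA.sum_repr x]
    conv_rhs => rw [← bA.sum_repr x]
    simp only [map_sum, map_smul, sum_inner, real_inner_smul_left]
    refine Finset.sum_congr rfl fun i _ => ?_
    rw [hGb i, hbAi i, keyA i (hsA i.2) y]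
  have hQinj : Function.Injective Q₀ := by
    rw [← LinearMap.ker_eq_bot]
    refine (Submodule.eq_bot_iff _).2 fun y hy => ?_
    have h0 : ⟪y, y⟫_ℝ = 0 := by
      have := key y y
      rw [LinearMap.mem_ker.1 hy, inner_zero_right] at this
      exact this.symm
    rwa [real_inner_self_eq_norm_sq, pow_eq_zero_iff (n := 2) (by norm_num),
      norm_eq_zero] at h0
  have hGinj : Function.Injective G₀ := by
    rw [← LinearMap.ker_eq_bot]
    refine (Submodule.eq_bot_iff _).2 fun x hx => ?_
    have h0 : ⟪x, x⟫_ℝ = 0 := by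
      have := key x x
      rw [LinearMap.mem_ker.1 hx, inner_zero_left] at this
      exact this.symm
    rwa [real_inner_self_eq_norm_sq, pow_eq_zero_iff (n := 2) (by norm_num),
      norm_eq_zero] at h0
  have hGsurj : Function.Surjective G₀ := (LinearMap.injective_iff_surjective).1 hGinj
  have hQsurj : Function.Surjective Q₀ := (LinearMap.injective_iff_surjective).1 hQinj
  refine ⟨LinearEquiv.ofBijective G₀ ⟨hGinj, hGsurj⟩,
    LinearEquiv.ofBijective Q₀ ⟨hQinj, hQsurj⟩, ?_, ?_, ?_⟩
  · intro a ha
    apply ext_inner_right ℝ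
    intro z
    obtain ⟨y, rfl⟩ := hQsurj z
    show ⟪g a, Q₀ y⟫_ℝ = ⟪G₀ a, Q₀ y⟫_ℝ
    rw [keyA a ha y, key a y]
  · intro b hb
    apply ext_inner_left ℝ
    intro z
    obtain ⟨x, rfl⟩ := hGsurj z
    show ⟪G₀ x, q b⟫_ℝ = ⟪G₀ x, Q₀ b⟫_ℝ
    rw [keyB b hb x, key x b]
  · apply LinearMap.ext
    intro z
    simp only [LinearMap.comp_apply, LinearMap.id_apply, LinearEquiv.coe_coe]
    apply ext_inner_left ℝ
    intro w
    obtain ⟨x, rfl⟩ := hGsurj w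
    show ⟪G₀ x, Q₀ (LinearMap.adjoint G₀ z)⟫_ℝ = ⟪G₀ x, z⟫_ℝ
    rw [key, LinearMap.adjoint_inner_right]
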